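/- Let E be a normed real vector space, n a natural number, and f : E → (Fin n → ℝ) differentiable at θ₀ with the n coordinates f(θ₀)(0), …, f(θ₀)(n−1) pairwise distinct. Then there exist a permutation σ of Fin n and a neighborhood U of θ₀ such that for every θ ∈ U, the coordinate vector θ ↦ (f(θ)(σ(0)), …, f(θ)(σ(n−1))) is strictly increasing and equals the increasing rearrangement of the coordinates of f(θ); consequently the map sending θ to the increasing rearrangement of the coordinates of f(θ) is differentiable at θ₀. -/
import Mathlib


/-- Let `E` be a normed real vector space, `n : ℕ`, and `f : E → (Fin n → ℝ)`
differentiable at `θ₀`, with the `n` coordinates of `f θ₀` pairwise distinct. Then there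
exist a permutation `σ` of `Fin n` and a neighborhood `U` of `θ₀` such that for every
`θ ∈ U` the coordinate vector `i ↦ f θ (σ i)` is strictly increasing and equals the
increasing rearrangement of the coordinates of `f θ` (given by `Tuple.sort`);
consequently, the map sending `θ` to the increasing rearrangement of the coordinates of
`f θ` is differentiable at `θ₀`. -/
theorem sorted_coordinates_differentiableAt {E : Type*} [NormedAddCommGroup E]
    [NormedSpace ℝ E] (n : ℕ) (f : E → Fin n → ℝ) (θ₀ : E)
    (hf : DifferentiableAt ℝ f θ₀) (hdist : Function.Injective (f θ₀)) :
    ∃ (σ : Equiv.Perm (Fin n)), ∃ U ∈ nhds θ₀,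
      (∀ θ ∈ U, StrictMono (fun i => f θ (σ i)) ∧
        (fun i => f θ (σ i)) = fun i => f θ (Tuple.sort (f θ) i)) ∧
      DifferentiableAt ℝ (fun θ => fun i => f θ (Tuple.sort (f θ) i)) θ₀ := by
  set σ := Tuple.sort (f θ₀) with hσ
  -- f θ₀ ∘ σ is strictly monotone
  have hsm : StrictMono (f θ₀ ∘ σ) :=
    (Tuple.monotone_sort (f θ₀)).strictMono_of_injective
      (hdist.comp (Equiv.injective σ))
  -- continuity of each coordinate
  have hcont : ∀ i : Fin n, ContinuousAt (fun θ => f θ (σ i)) θ₀ := fun i =>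
    (continuous_apply (σ i)).continuousAt.comp hf.continuousAt
  -- eventually, all strict inequalities persist
  have hev : ∀ᶠ θ in nhds θ₀, ∀ i j : Fin n, i < j → f θ (σ i) < f θ (σ j) := by
    rw [Filter.eventually_all]
    intro i
    rw [Filter.eventually_all]
    intro j
    by_cases hij : i < j
    · simp only [hij, forall_true_left]
      exact (hcont i).eventually_lt (hcont j) (hsm hij)
    · filter_upwards with θ h; exact absurd h hij
  refine ⟨σ, {θ | ∀ i j : Fin n, i < j → f θ (σ i) < f θ (σ j)}, hev, ?_, ?_⟩
  · intro θ hθ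
    have hsmθ : StrictMono (fun i => f θ (σ i)) := fun i j h => hθ i j h
    refine ⟨hsmθ, ?_⟩
    have := (Tuple.comp_sort_eq_comp_iff_monotone (f := f θ) (σ := σ)).mpr
      hsmθ.monotone
    exact funext fun i => congrFun this i
  · have heq : ∀ᶠ θ in nhds θ₀,
        (fun i => f θ (Tuple.sort (f θ) i)) = fun i => f θ (σ i) := by
      filter_upwards [hev] with θ hθ
      have hsmθ : StrictMono (fun i => f θ (σ i)) := fun i j h => hθ i j h
      have := (Tuple.comp_sort_eq_comp_iff_monotone (f := f θ) (σ := σ)).mpr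
        hsmθ.monotone
      exact (funext fun i => congrFun this i).symm
    have hdiff : DifferentiableAt ℝ (fun θ => fun i => f θ (σ i)) θ₀ := by
      rw [differentiableAt_pi]
      intro i
      exact (differentiableAt_pi.mp hf) (σ i)
    exact hdiff.congr_of_eventuallyEq heq
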